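/- Let λ ≥ 0 and assume L̂_λ has a global minimizer over ℝ^{m×n} (not necessarily unique). Then L̂_λ has a global minimizer δ* whose rank r = rank(δ*) satisfies r(r+1)/2 ≤ KN. -/

import Mathlib

open MeasureTheory Matrix

/-- Frobenius norm of a real matrix. -/
noncomputable def frobNorm {m n : ℕ} (A : Matrix (Fin m) (Fin n) ℝ) : ℝ :=
  Real.sqrt (∑ i, ∑ j, (A i j) ^ 2)

/-- Nuclear norm of a real matrix: the sum of its singular values, i.e. the sum of the
square roots of the eigenvalues of `Aᵀ * A`. -/
noncomputable def nuclearNorm {m n : ℕ} (A : Matrix (Fin m) (Fin n) ℝ) : ℝ :=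
  ∑ i, Real.sqrt ((Matrix.isHermitian_conjTranspose_mul_self A).eigenvalues i)

/-- Matrix inner product `⟨A, B⟩ = tr(Aᵀ B)`. -/
noncomputable def mInner {m n : ℕ} (A B : Matrix (Fin m) (Fin n) ℝ) : ℝ :=
  Matrix.trace (Aᵀ * B)

/-- The linearized empirical risk
`L̂(δ) = (1/N) ∑ᵢ ℓᵢ(bᵢ + (⟨G i j, δ⟩)ⱼ)`. -/
noncomputable def Lhat {m n K N : ℕ} (G : Fin N → Fin K → Matrix (Fin m) (Fin n) ℝ)
    (b : Fin N → Fin K → ℝ) (ℓ : Fin N → (Fin K → ℝ) → ℝ)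
    (δ : Matrix (Fin m) (Fin n) ℝ) : ℝ :=
  (1 / (N : ℝ)) * ∑ i, ℓ i fun j => b i j + mInner (G i j) δ

section SqrtPort
open scoped MatrixOrder

/-- Square root of a positive semidefinite matrix (as in the older Mathlib). -/
noncomputable def Matrix.PosSemidef.sqrt {k : ℕ} {B : Matrix (Fin k) (Fin k) ℝ}
    (hB : B.PosSemidef) : Matrix (Fin k) (Fin k) ℝ :=
  (hB.1.eigenvectorUnitary : Matrix (Fin k) (Fin k) ℝ) *
    Matrix.diagonal (RCLike.ofReal ∘ Real.sqrt ∘ hB.1.eigenvalues) *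
    (star hB.1.eigenvectorUnitary : Matrix (Fin k) (Fin k) ℝ)

lemma Matrix.PosSemidef.sqrt_eq_cfc {k : ℕ} {B : Matrix (Fin k) (Fin k) ℝ}
    (hB : B.PosSemidef) : hB.sqrt = CFC.sqrt B := by
  rw [CFC.sqrt_eq_real_sqrt B hB.nonneg, cfcₙ_eq_cfc, hB.1.cfc_eq, Matrix.IsHermitian.cfc,
    Unitary.conjStarAlgAut_apply]
  rfl

lemma Matrix.PosSemidef.posSemidef_sqrt {k : ℕ} {B : Matrix (Fin k) (Fin k) ℝ}
    (hB : B.PosSemidef) : hB.sqrt.PosSemidef := by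
  rw [hB.sqrt_eq_cfc]; exact (CFC.sqrt_nonneg B).posSemidef

lemma Matrix.PosSemidef.sqrt_mul_self {k : ℕ} {B : Matrix (Fin k) (Fin k) ℝ}
    (hB : B.PosSemidef) : hB.sqrt * hB.sqrt = B := by
  rw [hB.sqrt_eq_cfc]; exact CFC.sqrt_mul_sqrt_self B hB.nonneg

lemma Matrix.PosSemidef.eq_sqrt_of_sq_eq {k : ℕ} {A B : Matrix (Fin k) (Fin k) ℝ}
    (hA : A.PosSemidef) (hB : B.PosSemidef) (hAB : A ^ 2 = B) : A = hB.sqrt := by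
  rw [hB.sqrt_eq_cfc]
  exact (CFC.sqrt_unique (by rw [← pow_two]; exact hAB) hA.nonneg).symm

end SqrtPort

lemma eig_congr {k : ℕ} {M N : Matrix (Fin k) (Fin k) ℝ} (h : M = N)
    (hM : M.IsHermitian) (hN : N.IsHermitian) : hM.eigenvalues = hN.eigenvalues := by
  subst h; rfl

lemma trace_sqrt_eq {k : ℕ} {B : Matrix (Fin k) (Fin k) ℝ} (hB : B.PosSemidef) :
    hB.sqrt.trace = ∑ i, Real.sqrt (hB.1.eigenvalues i) := by
  rw [Matrix.PosSemidef.sqrt, Matrix.trace_mul_cycle]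
  rw [show (star hB.1.eigenvectorUnitary.1 : Matrix (Fin k) (Fin k) ℝ) * hB.1.eigenvectorUnitary.1
    = 1 from Unitary.coe_star_mul_self _]
  rw [one_mul, Matrix.trace_diagonal]
  simp

lemma nuclearNorm_eq_trace_sqrt {m n : ℕ} (A : Matrix (Fin m) (Fin n) ℝ) :
    nuclearNorm A = (Matrix.posSemidef_conjTranspose_mul_self A).sqrt.trace := by
  rw [trace_sqrt_eq, nuclearNorm]

lemma nuclearNorm_conj {m n r : ℕ} (U : Matrix (Fin m) (Fin r) ℝ) (V : Matrix (Fin n) (Fin r) ℝ)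
    (hU : Uᵀ * U = 1) (hV : Vᵀ * V = 1) {M : Matrix (Fin r) (Fin r) ℝ} (hM : M.PosSemidef) :
    nuclearNorm (U * M * Vᵀ) = M.trace := by
  have hVt : Vᴴ = Vᵀ := Matrix.conjTranspose_eq_transpose_of_trivial V
  have hMt : Mᵀ = M := by
    rw [← Matrix.conjTranspose_eq_transpose_of_trivial]; exact hM.1
  have hPSD : ((U * M * Vᵀ)ᴴ * (U * M * Vᵀ)).PosSemidef :=
    Matrix.posSemidef_conjTranspose_mul_self _
  have hVMV : (V * M * Vᴴ).PosSemidef := hM.mul_mul_conjTranspose_same V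
  have hsq : (V * M * Vᴴ) ^ 2 = (U * M * Vᵀ)ᴴ * (U * M * Vᵀ) := by
    rw [pow_two, hVt, Matrix.conjTranspose_mul, Matrix.conjTranspose_mul,
      Matrix.conjTranspose_eq_transpose_of_trivial,
      Matrix.conjTranspose_eq_transpose_of_trivial, Matrix.transpose_transpose, hMt]
    calc V * M * Vᵀ * (V * M * Vᵀ) = V * (M * ((Vᵀ * V) * M)) * Vᵀ := by
          simp only [Matrix.mul_assoc]
    _ = V * (M * ((Uᵀ * U) * M)) * Vᵀ := by rw [hV, hU]
    _ = V * M * Uᵀ * (U * M * Vᵀ) := by simp only [Matrix.mul_assoc]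
    _ = V * (M * Uᴴ) * (U * M * Vᵀ) := by
          rw [Matrix.conjTranspose_eq_transpose_of_trivial]; simp only [Matrix.mul_assoc]
  have := hVMV.eq_sqrt_of_sq_eq hPSD hsq
  rw [nuclearNorm_eq_trace_sqrt, ← this, hVt, Matrix.trace_mul_cycle, hV, one_mul]

lemma rank_conj {m n r : ℕ} (U : Matrix (Fin m) (Fin r) ℝ) (V : Matrix (Fin n) (Fin r) ℝ)
    (hU : Uᵀ * U = 1) (hV : Vᵀ * V = 1) (M : Matrix (Fin r) (Fin r) ℝ) :
    (U * M * Vᵀ).rank = M.rank := by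
  refine le_antisymm ?_ ?_
  · calc (U * M * Vᵀ).rank ≤ (U * M).rank := Matrix.rank_mul_le_left _ _
    _ ≤ M.rank := Matrix.rank_mul_le_right _ _
  · have hM : M = Uᵀ * (U * M * Vᵀ) * V := by
      calc M = 1 * M * 1 := by rw [one_mul, mul_one]
      _ = (Uᵀ * U) * M * (Vᵀ * V) := by rw [hU, hV]
      _ = _ := by simp only [Matrix.mul_assoc]
    conv_lhs => rw [hM]
    calc (Uᵀ * (U * M * Vᵀ) * V).rank ≤ (Uᵀ * (U * M * Vᵀ)).rank := Matrix.rank_mul_le_left _ _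
    _ ≤ (U * M * Vᵀ).rank := Matrix.rank_mul_le_right _ _

lemma compact_svd {m n : ℕ} (A : Matrix (Fin m) (Fin n) ℝ) :
    ∃ (U : Matrix (Fin m) (Fin A.rank) ℝ) (V : Matrix (Fin n) (Fin A.rank) ℝ)
      (C : Matrix (Fin A.rank) (Fin A.rank) ℝ),
      Uᵀ * U = 1 ∧ Vᵀ * V = 1 ∧ C.PosDef ∧ A = U * C * Vᵀ := by
  classical
  set B := Aᵀ * A with hBdef
  have hB : B.PosSemidef := by
    have := Matrix.posSemidef_conjTranspose_mul_self A
    rwa [Matrix.conjTranspose_eq_transpose_of_trivial] at this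
  have hH : B.IsHermitian := hB.1
  set μ : Fin n → ℝ := hH.eigenvalues with hμdef
  set W : Matrix (Fin n) (Fin n) ℝ := (hH.eigenvectorUnitary : Matrix (Fin n) (Fin n) ℝ)
    with hWdef
  have hWtW : Wᵀ * W = 1 := by
    have := Unitary.coe_star_mul_self hH.eigenvectorUnitary
    rwa [Matrix.star_eq_conjTranspose, Matrix.conjTranspose_eq_transpose_of_trivial] at this
  have hspec : B = W * Matrix.diagonal μ * Wᵀ := by
    have := hH.spectral_theorem
    rwa [Unitary.conjStarAlgAut_apply, Matrix.star_eq_conjTranspose,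
      Matrix.conjTranspose_eq_transpose_of_trivial,
      (by ext i; simp [hμdef] : (RCLike.ofReal ∘ hH.eigenvalues : Fin n → ℝ) = μ)] at this
  have hcard : Fintype.card {i // μ i ≠ 0} = A.rank := by
    rw [← Matrix.rank_transpose_mul_self A, ← hBdef, hH.rank_eq_card_non_zero_eigs]
  set e : Fin A.rank ≃ {i // μ i ≠ 0} := (Fintype.equivFinOfCardEq hcard).symm with hedef
  set f : Fin A.rank → Fin n := fun k => (e k : Fin n) with hfdef
  have hfinj : Function.Injective f := fun k l h => e.injective (Subtype.ext h)
  have hμf : ∀ k, 0 < μ (f k) := fun k =>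
    lt_of_le_of_ne (hB.eigenvalues_nonneg _) (Ne.symm (e k).2)
  set V : Matrix (Fin n) (Fin A.rank) ℝ := W.submatrix id f with hVdef
  set σ : Fin A.rank → ℝ := fun k => Real.sqrt (μ (f k)) with hσdef
  have hσpos : ∀ k, 0 < σ k := fun k => Real.sqrt_pos.mpr (hμf k)
  set C : Matrix (Fin A.rank) (Fin A.rank) ℝ := Matrix.diagonal σ with hCdef
  set E : Matrix (Fin A.rank) (Fin A.rank) ℝ := Matrix.diagonal (fun k => (σ k)⁻¹) with hEdef
  set U : Matrix (Fin m) (Fin A.rank) ℝ := A * V * E with hUdef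
  -- (1) Vᵀ V = 1
  have hVV : Vᵀ * V = 1 := by
    ext k l
    have h1 : (Vᵀ * V) k l = (Wᵀ * W) (f k) (f l) := by
      simp [Matrix.mul_apply, hVdef]
    rw [h1, hWtW]
    by_cases h : k = l
    · subst h; simp [Matrix.one_apply]
    · rw [Matrix.one_apply_ne (fun hc => h (hfinj hc)), Matrix.one_apply_ne h]
  -- (2) B V = V diag(μ∘f)
  have hBV : B * V = V * Matrix.diagonal (fun k => μ (f k)) := by
    have hBW : B * W = W * Matrix.diagonal μ := by
      rw [hspec]
      calc W * Matrix.diagonal μ * Wᵀ * W = W * Matrix.diagonal μ * (Wᵀ * W) := by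
            simp only [Matrix.mul_assoc]
      _ = W * Matrix.diagonal μ := by rw [hWtW, Matrix.mul_one]
    ext i k
    have h1 : (B * V) i k = (B * W) i (f k) := by
      simp [Matrix.mul_apply, hVdef]
    rw [h1, hBW, Matrix.mul_diagonal, Matrix.mul_diagonal]
    simp [hVdef]
  -- (3) V diag(μ∘f) Vᵀ = B
  have hBeq : V * Matrix.diagonal (fun k => μ (f k)) * Vᵀ = B := by
    ext i j
    have hL : (V * Matrix.diagonal (fun k => μ (f k)) * Vᵀ) i j
        = ∑ k, W i (f k) * μ (f k) * W j (f k) := by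
      simp [Matrix.mul_apply, Matrix.diagonal_apply, hVdef, ite_mul, zero_mul, mul_ite, mul_zero,
        Finset.sum_ite_eq, Finset.sum_ite_eq']
    have hR : B i j = ∑ l, W i l * μ l * W j l := by
      rw [hspec]
      simp [Matrix.mul_apply, Matrix.diagonal_apply, ite_mul, zero_mul, mul_ite, mul_zero,
        Finset.sum_ite_eq, Finset.sum_ite_eq']
    rw [hL, hR]
    have h1 : ∑ k, W i (f k) * μ (f k) * W j (f k)
        = ∑ s : {l // μ l ≠ 0}, W i (s : Fin n) * μ s * W j s :=
      Equiv.sum_comp e (fun s : {l // μ l ≠ 0} => W i (s : Fin n) * μ s * W j s)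
    rw [h1]
    have h2 : ∑ a ∈ Finset.univ.filter (fun l => μ l ≠ 0), W i a * μ a * W j a
        = ∑ s : {l // μ l ≠ 0}, W i (s : Fin n) * μ s * W j s :=
      Finset.sum_subtype _ (by simp) (fun l => W i l * μ l * W j l)
    rw [← h2]
    exact Finset.sum_subset (Finset.filter_subset _ _) (by
      intro x _ hx
      simp only [Finset.mem_filter, Finset.mem_univ, true_and, not_not] at hx
      simp [hx])
  -- (4) Vᵀ B V = diag (μ ∘ f)
  have hVBV : Vᵀ * B * V = Matrix.diagonal (fun k => μ (f k)) := by
    calc Vᵀ * B * V = Vᵀ * (B * V) := by simp only [Matrix.mul_assoc]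
    _ = Vᵀ * (V * Matrix.diagonal (fun k => μ (f k))) := by rw [hBV]
    _ = (Vᵀ * V) * Matrix.diagonal (fun k => μ (f k)) := by simp only [Matrix.mul_assoc]
    _ = _ := by rw [hVV, one_mul]
  -- (5) Uᵀ U = 1
  have hUU : Uᵀ * U = 1 := by
    have hEt : Eᵀ = E := Matrix.diagonal_transpose _
    have : Uᵀ * U = E * (Vᵀ * B * V) * E := by
      rw [hUdef, Matrix.transpose_mul, Matrix.transpose_mul, hEt, hBdef]
      simp only [Matrix.mul_assoc]
    rw [this, hVBV, hEdef]
    rw [Matrix.diagonal_mul_diagonal, Matrix.diagonal_mul_diagonal]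
    have hfun : (fun i => (σ i)⁻¹ * μ (f i) * (σ i)⁻¹) = fun _ => (1:ℝ) := by
      funext k
      have h2 : σ k * σ k = μ (f k) := Real.mul_self_sqrt (hμf k).le
      have h3 : σ k ≠ 0 := (hσpos k).ne'
      rw [← h2]
      field_simp
    rw [hfun, Matrix.diagonal_one]
  -- (6) A = U C Vᵀ
  have hUC : U * C = A * V := by
    rw [hUdef]
    calc A * V * E * C = A * V * (E * C) := by simp only [Matrix.mul_assoc]
    _ = A * V := by
        rw [hEdef, hCdef, Matrix.diagonal_mul_diagonal,
          show (fun k => (σ k)⁻¹ * σ k) = fun _ => (1:ℝ) from funext fun k =>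
            inv_mul_cancel₀ (hσpos k).ne', Matrix.diagonal_one, Matrix.mul_one]
  have hAVV : A * V * Vᵀ = A := by
    have hzero : (A - A * V * Vᵀ)ᵀ * (A - A * V * Vᵀ) = 0 := by
      have hexp : (A - A * V * Vᵀ)ᵀ * (A - A * V * Vᵀ)
          = B - B * (V * Vᵀ) - (V * Vᵀ) * B + (V * Vᵀ) * B * (V * Vᵀ) := by
        rw [Matrix.transpose_sub, Matrix.sub_mul, Matrix.mul_sub, Matrix.mul_sub]
        rw [Matrix.transpose_mul, Matrix.transpose_mul, Matrix.transpose_transpose, hBdef]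
        simp only [Matrix.mul_assoc]
        abel
      have hB1 : B * (V * Vᵀ) = B := by
        conv_lhs => rw [← hBeq]
        calc V * Matrix.diagonal (fun k => μ (f k)) * Vᵀ * (V * Vᵀ)
            = V * Matrix.diagonal (fun k => μ (f k)) * (Vᵀ * V) * Vᵀ := by
              simp only [Matrix.mul_assoc]
        _ = _ := by rw [hVV, Matrix.mul_one, hBeq]
      have hB2 : (V * Vᵀ) * B = B := by
        conv_lhs => rw [← hBeq]
        calc (V * Vᵀ) * (V * Matrix.diagonal (fun k => μ (f k)) * Vᵀ)
            = V * (Vᵀ * V) * (Matrix.diagonal (fun k => μ (f k)) * Vᵀ) := by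
              simp only [Matrix.mul_assoc]
        _ = _ := by rw [hVV, Matrix.mul_one, ← Matrix.mul_assoc, hBeq]
      rw [hexp, hB1, hB2, hB1]
      abel
    have h4 : (A - A * V * Vᵀ)ᴴ * (A - A * V * Vᵀ) = 0 := by
      rwa [Matrix.conjTranspose_eq_transpose_of_trivial]
    have h5 := Matrix.conjTranspose_mul_self_eq_zero.mp h4
    exact (sub_eq_zero.mp h5).symm
  exact ⟨U, V, C, hUU, hVV, Matrix.PosDef.diagonal hσpos, by
    rw [hUC, Matrix.mul_assoc, ← Matrix.mul_assoc, hAVV]⟩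

lemma star_pi_real {r : ℕ} (x : Fin r → ℝ) : star x = x := funext fun i => star_trivial _

lemma quadform_zero {r : ℕ} {S : Matrix (Fin r) (Fin r) ℝ} (hS : Sᵀ = S)
    (h : ∀ x : Fin r → ℝ, x ⬝ᵥ (S *ᵥ x) = 0) : S = 0 := by
  ext i j
  have hii := h (Pi.single i 1)
  have hjj := h (Pi.single j 1)
  have hij := h (Pi.single i 1 + Pi.single j 1)
  have hsym : S j i = S i j := by
    conv_lhs => rw [← hS]
    exact Matrix.transpose_apply S j i
  simp only [Matrix.mulVec_single, add_dotProduct, dotProduct_add,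
    Matrix.mulVec_add, single_dotProduct, mul_one, one_mul] at hii hjj hij
  simp only [Pi.smul_apply, op_smul_eq_mul, Matrix.col_apply, mul_one] at hii hjj hij
  simp only [Matrix.zero_apply]
  -- hij : S i i + S i j + (S j i + S j j) = 0 roughly
  nlinarith [hii, hjj, hij, hsym]

lemma quad_abs_bound {r : ℕ} (T : Matrix (Fin r) (Fin r) ℝ) (y : Fin r → ℝ) :
    |y ⬝ᵥ (T *ᵥ y)| ≤ (∑ i, ∑ j, |T i j|) * (y ⬝ᵥ y) := by
  have hyy : ∀ i j, |y i| * |y j| ≤ y ⬝ᵥ y := by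
    intro i j
    have h1 : y i ^ 2 ≤ ∑ k, y k * y k := by
      rw [pow_two]
      exact Finset.single_le_sum (f := fun k => y k * y k)
        (fun k _ => mul_self_nonneg _) (Finset.mem_univ i)
    have h2 : y j ^ 2 ≤ ∑ k, y k * y k := by
      rw [pow_two]
      exact Finset.single_le_sum (f := fun k => y k * y k)
        (fun k _ => mul_self_nonneg _) (Finset.mem_univ j)
    have h3 : y ⬝ᵥ y = ∑ k, y k * y k := rfl
    nlinarith [sq_nonneg (|y i| - |y j|), sq_abs (y i), sq_abs (y j)]
  have h0 : y ⬝ᵥ (T *ᵥ y) = ∑ i, y i * ∑ j, T i j * y j := rfl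
  calc |y ⬝ᵥ (T *ᵥ y)| ≤ ∑ i, |y i * ∑ j, T i j * y j| := by
        rw [h0]; exact Finset.abs_sum_le_sum_abs _ _
  _ ≤ ∑ i, ∑ j, |T i j| * (y ⬝ᵥ y) := by
      apply Finset.sum_le_sum
      intro i _
      calc |y i * ∑ j, T i j * y j| = |y i| * |∑ j, T i j * y j| := abs_mul _ _
      _ ≤ |y i| * ∑ j, |T i j * y j| :=
          mul_le_mul_of_nonneg_left (Finset.abs_sum_le_sum_abs _ _) (abs_nonneg _)
      _ = ∑ j, |T i j| * (|y i| * |y j|) := by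
          rw [Finset.mul_sum]
          congr 1; funext j
          rw [abs_mul]; ring
      _ ≤ ∑ j, |T i j| * (y ⬝ᵥ y) := by
          apply Finset.sum_le_sum
          intro j _
          exact mul_le_mul_of_nonneg_left (hyy i j) (abs_nonneg _)
  _ = (∑ i, ∑ j, |T i j|) * (y ⬝ᵥ y) := by rw [Finset.sum_mul]; congr 1; funext i; rw [Finset.sum_mul]

lemma quad_conj {r : ℕ} (P M : Matrix (Fin r) (Fin r) ℝ) (y : Fin r → ℝ) :
    (P *ᵥ y) ⬝ᵥ (M *ᵥ (P *ᵥ y)) = y ⬝ᵥ ((Pᵀ * M * P) *ᵥ y) := by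
  rw [Matrix.dotProduct_mulVec y, ← Matrix.vecMul_vecMul, ← Matrix.vecMul_vecMul,
    Matrix.vecMul_transpose, ← Matrix.dotProduct_mulVec, Matrix.dotProduct_mulVec (P *ᵥ y) M]

lemma dotProduct_self_pos {r : ℕ} {y : Fin r → ℝ} (hy : y ≠ 0) : 0 < y ⬝ᵥ y := by
  obtain ⟨i, hi⟩ := Function.ne_iff.mp hy
  have : (0:ℝ) < y i * y i := by
    rcases lt_or_gt_of_ne (fun h => hi (by simpa using h) : y i ≠ 0) with h | h <;> nlinarith
  calc (0:ℝ) < y i * y i := this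
  _ ≤ ∑ k, y k * y k :=
      Finset.single_le_sum (f := fun k => y k * y k) (fun k _ => mul_self_nonneg _)
        (Finset.mem_univ i)

lemma herm_add_smul {r : ℕ} {C S : Matrix (Fin r) (Fin r) ℝ} (hC : C.IsHermitian)
    (hS : S.IsHermitian) (t : ℝ) : (C + t • S).IsHermitian := by
  unfold Matrix.IsHermitian at *
  rw [Matrix.conjTranspose_add, Matrix.conjTranspose_smul, hC, hS, star_trivial]

set_option maxHeartbeats 1000000 in
lemma posdef_add_smul {r : ℕ} {C S : Matrix (Fin r) (Fin r) ℝ} (hC : C.PosDef)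
    (hS : S.IsHermitian) :
    ∃ ε₀ > 0, ∀ ε : ℝ, |ε| < ε₀ → (C + ε • S).PosDef := by
  classical
  set R := hC.posSemidef.sqrt with hRdef
  have hRpsd : R.PosSemidef := hC.posSemidef.posSemidef_sqrt
  have hR2 : R * R = C := hC.posSemidef.sqrt_mul_self
  have hRt : Rᵀ = R := by
    have := hRpsd.1
    rwa [Matrix.IsHermitian, Matrix.conjTranspose_eq_transpose_of_trivial] at this
  have hRdet : IsUnit R.det := by
    have h1 : R.det * R.det = C.det := by rw [← Matrix.det_mul, hR2]
    have h2 : (0:ℝ) < C.det := hC.det_pos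
    have : R.det ≠ 0 := fun h => by rw [h, mul_zero] at h1; exact h2.ne' h1.symm
    exact this.isUnit
  have hRiR : R⁻¹ * R = 1 := Matrix.nonsing_inv_mul R hRdet
  have hRRi : R * R⁻¹ = 1 := Matrix.mul_nonsing_inv R hRdet
  set T : Matrix (Fin r) (Fin r) ℝ := R⁻¹ᵀ * S * R⁻¹ with hTdef
  set τ : ℝ := ∑ i, ∑ j, |T i j| with hτdef
  have hτ0 : 0 ≤ τ := Finset.sum_nonneg fun i _ => Finset.sum_nonneg fun j _ => abs_nonneg _
  have hτ1 : (0:ℝ) < τ + 1 := by linarith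
  refine ⟨(τ + 1)⁻¹, by positivity, fun ε hε => ?_⟩
  refine Matrix.PosDef.of_dotProduct_mulVec_pos (herm_add_smul hC.1 hS ε) (fun x hx => ?_)
  rw [star_pi_real]
  set y : Fin r → ℝ := R *ᵥ x with hydef
  have hxy : x = R⁻¹ *ᵥ y := by
    rw [hydef, Matrix.mulVec_mulVec, hRiR, Matrix.one_mulVec]
  have hy0 : y ≠ 0 := by
    intro h
    apply hx
    rw [hxy, h, Matrix.mulVec_zero]
  have hCq : x ⬝ᵥ (C *ᵥ x) = y ⬝ᵥ y := by
    rw [← hR2, ← Matrix.mulVec_mulVec, Matrix.dotProduct_mulVec x R, ← Matrix.mulVec_transpose,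
      hRt]
  have hSq : x ⬝ᵥ (S *ᵥ x) = y ⬝ᵥ (T *ᵥ y) := by
    rw [hxy, quad_conj]
  have hq : x ⬝ᵥ ((C + ε • S) *ᵥ x) = y ⬝ᵥ y + ε * (y ⬝ᵥ (T *ᵥ y)) := by
    rw [Matrix.add_mulVec, dotProduct_add, hCq, Matrix.smul_mulVec,
      dotProduct_smul, hSq, smul_eq_mul]
  rw [hq]
  have hyy : 0 < y ⬝ᵥ y := dotProduct_self_pos hy0
  have habs : |y ⬝ᵥ (T *ᵥ y)| ≤ τ * (y ⬝ᵥ y) := quad_abs_bound T y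
  set a : ℝ := y ⬝ᵥ y with hadef
  set q : ℝ := y ⬝ᵥ (T *ᵥ y) with hqdef
  have h1 : |ε * q| ≤ (τ + 1)⁻¹ * (τ * a) := by
    rw [abs_mul]
    exact mul_le_mul hε.le habs (abs_nonneg _) (le_of_lt (inv_pos.mpr hτ1))
  have h2 : (τ + 1)⁻¹ * (τ * a) < a := by
    rw [inv_mul_lt_iff₀ hτ1]
    have := mul_lt_mul_of_pos_right (lt_add_one τ) hyy
    linarith [this]
  have h3 : -(ε * q) ≤ |ε * q| := neg_le_abs _
  linarith

lemma exists_boundary {r : ℕ} {C S : Matrix (Fin r) (Fin r) ℝ} (hC : C.PosDef)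
    (hS : S.IsHermitian) (hneg : ∃ x, x ⬝ᵥ (S *ᵥ x) < 0) :
    ∃ t : ℝ, 0 ≤ t ∧ (C + t • S).PosSemidef ∧ ¬ (C + t • S).PosDef := by
  classical
  set T : Set ℝ := {t : ℝ | 0 ≤ t ∧ ∀ x, 0 ≤ x ⬝ᵥ ((C + t • S) *ᵥ x)} with hTdef
  have hquad : ∀ t (x : Fin r → ℝ),
      x ⬝ᵥ ((C + t • S) *ᵥ x) = x ⬝ᵥ (C *ᵥ x) + t * (x ⬝ᵥ (S *ᵥ x)) := by
    intro t x
    rw [Matrix.add_mulVec, dotProduct_add, Matrix.smul_mulVec,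
      dotProduct_smul, smul_eq_mul]
  have hCnn : ∀ x, 0 ≤ x ⬝ᵥ (C *ᵥ x) := by
    intro x
    have := hC.posSemidef.dotProduct_mulVec_nonneg x
    rwa [star_pi_real] at this
  have h0T : (0:ℝ) ∈ T := by
    refine ⟨le_refl _, fun x => ?_⟩
    rw [hquad]
    simpa using hCnn x
  obtain ⟨x₀, hx₀⟩ := hneg
  have hbdd : BddAbove T := by
    refine ⟨(x₀ ⬝ᵥ (C *ᵥ x₀)) / (-(x₀ ⬝ᵥ (S *ᵥ x₀))), fun t ht => ?_⟩
    have h1 := ht.2 x₀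
    rw [hquad] at h1
    rw [le_div_iff₀ (by linarith : (0:ℝ) < -(x₀ ⬝ᵥ (S *ᵥ x₀)))]
    nlinarith
  set t₀ : ℝ := sSup T with ht₀def
  have ht₀0 : 0 ≤ t₀ := le_csSup hbdd h0T
  have ht₀T : ∀ x, 0 ≤ x ⬝ᵥ ((C + t₀ • S) *ᵥ x) := by
    intro x
    rw [hquad]
    rcases le_or_gt 0 (x ⬝ᵥ (S *ᵥ x)) with h | h
    · have := hCnn x
      nlinarith
    · have hub : t₀ ≤ (x ⬝ᵥ (C *ᵥ x)) / (-(x ⬝ᵥ (S *ᵥ x))) := by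
        apply csSup_le ⟨0, h0T⟩
        intro t ht
        have h1 := ht.2 x
        rw [hquad] at h1
        rw [le_div_iff₀ (by linarith : (0:ℝ) < -(x ⬝ᵥ (S *ᵥ x)))]
        nlinarith
      rw [div_eq_mul_inv] at hub
      have h2 : t₀ * (-(x ⬝ᵥ (S *ᵥ x))) ≤ x ⬝ᵥ (C *ᵥ x) := by
        have h3 : (0:ℝ) < -(x ⬝ᵥ (S *ᵥ x)) := by linarith
        calc t₀ * (-(x ⬝ᵥ (S *ᵥ x)))
            ≤ (x ⬝ᵥ (C *ᵥ x)) * (-(x ⬝ᵥ (S *ᵥ x)))⁻¹ * (-(x ⬝ᵥ (S *ᵥ x))) :=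
              mul_le_mul_of_nonneg_right hub h3.le
        _ = x ⬝ᵥ (C *ᵥ x) := by
              rw [mul_assoc, inv_mul_cancel₀ h3.ne', mul_one]
      nlinarith
  have hpsd : (C + t₀ • S).PosSemidef := by
    refine Matrix.PosSemidef.of_dotProduct_mulVec_nonneg (herm_add_smul hC.1 hS t₀) (fun x => ?_)
    rw [star_pi_real]
    exact ht₀T x
  refine ⟨t₀, ht₀0, hpsd, fun hpd => ?_⟩
  obtain ⟨ε₀, hε₀, hpert⟩ := posdef_add_smul hpd hS
  have hmem : t₀ + ε₀ / 2 ∈ T := by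
    have hpd2 : (C + (t₀ + ε₀/2) • S).PosDef := by
      have := hpert (ε₀/2) (by rw [abs_of_pos (by linarith)]; linarith)
      have heq : C + t₀ • S + (ε₀/2) • S = C + (t₀ + ε₀/2) • S := by
        rw [add_smul]; abel
      rwa [heq] at this
    refine ⟨by linarith, fun x => ?_⟩
    by_cases hx : x = 0
    · subst hx; simp
    · have := hpd2.dotProduct_mulVec_pos hx
      rw [star_pi_real] at this
      exact this.le
  have : t₀ + ε₀ / 2 ≤ t₀ := le_csSup hbdd hmem
  linarith

lemma rank_lt_of_not_posdef {r : ℕ} {M : Matrix (Fin r) (Fin r) ℝ} (hPSD : M.PosSemidef)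
    (hnPD : ¬ M.PosDef) : M.rank < r := by
  have hx : ∃ x : Fin r → ℝ, x ≠ 0 ∧ M *ᵥ x = 0 := by
    by_contra h
    push_neg at h
    apply hnPD
    refine Matrix.PosDef.of_dotProduct_mulVec_pos hPSD.1 (fun x hx => ?_)
    have h1 := hPSD.dotProduct_mulVec_nonneg x
    rcases lt_or_eq_of_le h1 with h2 | h2
    · exact h2
    · exfalso
      have h3 : M *ᵥ x = 0 := (hPSD.dotProduct_mulVec_zero_iff x).mp h2.symm
      exact h x hx h3
  obtain ⟨x, hx0, hMx⟩ := hx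
  have hker : x ∈ LinearMap.ker M.mulVecLin := by
    simpa [Matrix.mulVecLin_apply] using hMx
  have hkerpos : 0 < Module.finrank ℝ (LinearMap.ker M.mulVecLin) := by
    rw [Module.finrank_pos_iff]
    exact ⟨⟨⟨x, hker⟩, 0, fun h => hx0 (by simpa using congrArg Subtype.val h)⟩⟩
  have hrn := LinearMap.finrank_range_add_finrank_ker M.mulVecLin
  have hfr : Module.finrank ℝ (Fin r → ℝ) = r := by simp
  have hrank : M.rank = Module.finrank ℝ (LinearMap.range M.mulVecLin) := rfl
  omega

lemma card_sym_pairs (r : ℕ) :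
    Fintype.card {p : Fin r × Fin r // p.1 ≤ p.2} = r * (r + 1) / 2 := by
  have h1 : Fintype.card {p : Fin r × Fin r // p.1 ≤ p.2}
      = (Finset.univ.filter (fun p : Fin r × Fin r => p.1 ≤ p.2)).card :=
    Fintype.card_subtype _
  have h2 : (Finset.univ.filter (fun p : Fin r × Fin r => p.1 ≤ p.2)).card
      = ∑ j : Fin r, (Finset.univ.filter (fun i : Fin r => i ≤ j)).card := by
    simp only [Finset.card_filter]
    rw [← Finset.univ_product_univ, Finset.sum_product_right]
  have h3 : ∀ j : Fin r, (Finset.univ.filter (fun i : Fin r => i ≤ j)).card = (j : ℕ) + 1 := by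
    intro j
    have : Finset.univ.filter (fun i : Fin r => i ≤ j) = Finset.Iic j := by
      ext i; simp
    rw [this, Fin.card_Iic]
  have h6 : ∑ j : Fin r, (Finset.univ.filter (fun i : Fin r => i ≤ j)).card
      = ∑ j : Fin r, ((j : ℕ) + 1) := Finset.sum_congr rfl (fun j _ => h3 j)
  have h7 : ∑ j : Fin r, ((j : ℕ) + 1) = ∑ i ∈ Finset.range r, (i + 1) :=
    Fin.sum_univ_eq_sum_range (fun i => i + 1) r
  rw [h1, h2, h6, h7]
  have h4 : ∑ i ∈ Finset.range r, (i + 1) = ∑ i ∈ Finset.range (r + 1), i := by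
    rw [Finset.sum_add_distrib, Finset.sum_const, Finset.card_range, Finset.sum_range_succ]
    simp [smul_eq_mul]
  have h5 : (∑ i ∈ Finset.range (r + 1), i) * 2 = r * (r + 1) := by
    rw [Finset.sum_range_id_mul_two, Nat.add_sub_cancel, Nat.mul_comm]
  omega

/-- The linear embedding of functions on ordered pairs into symmetric matrices. -/
noncomputable def symEmb (r : ℕ) :
    ({p : Fin r × Fin r // p.1 ≤ p.2} → ℝ) →ₗ[ℝ] Matrix (Fin r) (Fin r) ℝ where
  toFun g := Matrix.of fun i j =>
    if h : i ≤ j then g ⟨(i, j), h⟩ else g ⟨(j, i), le_of_not_ge h⟩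
  map_add' g₁ g₂ := by
    ext i j
    by_cases h : i ≤ j <;> simp [h]
  map_smul' c g := by
    ext i j
    by_cases h : i ≤ j <;> simp [h]

lemma symEmb_symm (r : ℕ) (g : {p : Fin r × Fin r // p.1 ≤ p.2} → ℝ) :
    (symEmb r g)ᵀ = symEmb r g := by
  ext i j
  simp only [Matrix.transpose_apply, symEmb, LinearMap.coe_mk, AddHom.coe_mk, Matrix.of_apply]
  by_cases h1 : i ≤ j <;> by_cases h2 : j ≤ i
  · have : i = j := le_antisymm h1 h2
    subst this; rfl
  · simp [h1, h2]
  · simp [h1, h2]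
  · exact absurd (le_of_not_ge h1) h2

lemma symEmb_inj (r : ℕ) : Function.Injective (symEmb r) := by
  intro g₁ g₂ h
  funext p
  obtain ⟨⟨i, j⟩, hij⟩ := p
  have := congrFun (congrFun h i) j
  simpa [symEmb, hij] using this

lemma exists_symm_in_kernel {r : ℕ} {W : Type*} [AddCommGroup W] [Module ℝ W]
    [FiniteDimensional ℝ W]
    (φ : Matrix (Fin r) (Fin r) ℝ →ₗ[ℝ] W) (hd : Module.finrank ℝ W < r * (r + 1) / 2) :
    ∃ S : Matrix (Fin r) (Fin r) ℝ, Sᵀ = S ∧ S ≠ 0 ∧ φ S = 0 := by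
  classical
  set ψ := φ.comp (symEmb r) with hψdef
  by_cases h : ∀ g, ψ g = 0 → g = 0
  · exfalso
    have hinj : Function.Injective ψ := by
      rw [← LinearMap.ker_eq_bot, LinearMap.ker_eq_bot']
      intro g hg
      exact h g hg
    have hle := LinearMap.finrank_le_finrank_of_injective hinj
    rw [Module.finrank_fintype_fun_eq_card, card_sym_pairs] at hle
    omega
  · push_neg at h
    obtain ⟨g, hg0, hgne⟩ := h
    exact ⟨symEmb r g, symEmb_symm r g, fun h =>
      hgne (symEmb_inj r (by rw [h, map_zero])), hg0⟩

lemma mInner_add {m n : ℕ} (A X Y : Matrix (Fin m) (Fin n) ℝ) :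
    mInner A (X + Y) = mInner A X + mInner A Y := by
  unfold mInner
  rw [Matrix.mul_add, Matrix.trace_add]

lemma mInner_smul {m n : ℕ} (A X : Matrix (Fin m) (Fin n) ℝ) (t : ℝ) :
    mInner A (t • X) = t * mInner A X := by
  unfold mInner
  rw [Matrix.mul_smul, Matrix.trace_smul, smul_eq_mul]

lemma conj_add_smul {m n r : ℕ} (U : Matrix (Fin m) (Fin r) ℝ) (V : Matrix (Fin n) (Fin r) ℝ)
    (M S : Matrix (Fin r) (Fin r) ℝ) (t : ℝ) :
    U * (M + t • S) * Vᵀ = U * M * Vᵀ + t • (U * S * Vᵀ) := by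
  rw [Matrix.mul_add, Matrix.add_mul, Matrix.mul_smul, Matrix.smul_mul]

set_option maxHeartbeats 2000000 in
/-- Theorem 3.1: if `L̂_λ` has a global minimizer, then it has a global
minimizer `δ*` whose rank `r = rank δ*` satisfies `r(r+1)/2 ≤ KN`. -/
theorem lowRank_solution_exists
    (m n K N : ℕ) (hm : 0 < m) (hn : 0 < n) (hK : 0 < K) (hN : 0 < N)
    (G : Fin N → Fin K → Matrix (Fin m) (Fin n) ℝ)
    (b : Fin N → Fin K → ℝ) (ℓ : Fin N → (Fin K → ℝ) → ℝ)
    (hconv : ∀ i, ConvexOn ℝ Set.univ (ℓ i))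
    (hnonneg : ∀ i x, 0 ≤ ℓ i x)
    (hsmooth : ∀ i, ContDiff ℝ 2 (ℓ i))
    (lam : ℝ) (hlam : 0 ≤ lam)
    (hmin : ∃ δ : Matrix (Fin m) (Fin n) ℝ, ∀ δ' : Matrix (Fin m) (Fin n) ℝ,
      Lhat G b ℓ δ + lam * nuclearNorm δ ≤ Lhat G b ℓ δ' + lam * nuclearNorm δ') :
    ∃ δstar : Matrix (Fin m) (Fin n) ℝ,
      (∀ δ' : Matrix (Fin m) (Fin n) ℝ,
        Lhat G b ℓ δstar + lam * nuclearNorm δstar ≤ Lhat G b ℓ δ' + lam * nuclearNorm δ') ∧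
      δstar.rank * (δstar.rank + 1) / 2 ≤ K * N := by
  classical
  obtain ⟨δ₀, hδ₀⟩ := hmin
  suffices H : ∀ (r : ℕ) (δ : Matrix (Fin m) (Fin n) ℝ), δ.rank = r →
      (∀ δ', Lhat G b ℓ δ + lam * nuclearNorm δ ≤ Lhat G b ℓ δ' + lam * nuclearNorm δ') →
      ∃ δstar, (∀ δ', Lhat G b ℓ δstar + lam * nuclearNorm δstar
          ≤ Lhat G b ℓ δ' + lam * nuclearNorm δ') ∧
        δstar.rank * (δstar.rank + 1) / 2 ≤ K * N by
    exact H δ₀.rank δ₀ rfl hδ₀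
  intro r
  induction r using Nat.strong_induction_on with
  | _ r IH =>
  intro δ hrank hδ
  by_cases hle : r * (r + 1) / 2 ≤ K * N
  · exact ⟨δ, hδ, by rw [hrank]; exact hle⟩
  push_neg at hle
  subst hrank
  obtain ⟨U, V, C, hU, hV, hC, hA⟩ := compact_svd δ
  -- the constraint map
  set φ : Matrix (Fin δ.rank) (Fin δ.rank) ℝ →ₗ[ℝ] (Fin N × Fin K → ℝ) :=
    { toFun := fun S => fun p => mInner (G p.1 p.2) (U * S * Vᵀ)
      map_add' := by
        intro S T
        funext p
        simp only [Pi.add_apply]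
        rw [Matrix.mul_add, Matrix.add_mul, mInner_add]
      map_smul' := by
        intro c S
        funext p
        simp only [Pi.smul_apply, RingHom.id_apply, smul_eq_mul]
        rw [Matrix.mul_smul, Matrix.smul_mul, mInner_smul] } with hφdef
  have hfr : Module.finrank ℝ (Fin N × Fin K → ℝ) < δ.rank * (δ.rank + 1) / 2 := by
    rw [Module.finrank_fintype_fun_eq_card, Fintype.card_prod, Fintype.card_fin, Fintype.card_fin]
    have : N * K = K * N := Nat.mul_comm _ _
    omega
  obtain ⟨S, hSt, hSne, hφS⟩ := exists_symm_in_kernel φ hfr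
  have hSH : S.IsHermitian := by
    rw [Matrix.IsHermitian, Matrix.conjTranspose_eq_transpose_of_trivial]
    exact hSt
  have hφ : ∀ i j, mInner (G i j) (U * S * Vᵀ) = 0 := by
    intro i j
    have := congrFun hφS (i, j)
    simpa [hφdef] using this
  -- key objective formula
  have hnucδ : nuclearNorm δ = C.trace := by
    conv_lhs => rw [hA]
    exact nuclearNorm_conj U V hU hV hC.posSemidef
  have hkey : ∀ (S'' : Matrix (Fin δ.rank) (Fin δ.rank) ℝ),
      (∀ i j, mInner (G i j) (U * S'' * Vᵀ) = 0) →
      ∀ t : ℝ, (C + t • S'').PosSemidef →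
      Lhat G b ℓ (U * (C + t • S'') * Vᵀ) + lam * nuclearNorm (U * (C + t • S'') * Vᵀ)
        = Lhat G b ℓ δ + lam * (C.trace + t * S''.trace) := by
    intro S'' hφ'' t hpsd
    have h1 : Lhat G b ℓ (U * (C + t • S'') * Vᵀ) = Lhat G b ℓ δ := by
      rw [conj_add_smul]
      unfold Lhat
      congr 1
      apply Finset.sum_congr rfl
      intro i _
      congr 1
      funext j
      rw [mInner_add, mInner_smul, hφ'' i j, mul_zero, add_zero, ← hA]
    have h2 : nuclearNorm (U * (C + t • S'') * Vᵀ) = C.trace + t * S''.trace := by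
      rw [nuclearNorm_conj U V hU hV hpsd, Matrix.trace_add, Matrix.trace_smul, smul_eq_mul]
    rw [h1, h2]
  -- lam * trace S = 0
  have hts : ∀ (S'' : Matrix (Fin δ.rank) (Fin δ.rank) ℝ), S''.IsHermitian →
      (∀ i j, mInner (G i j) (U * S'' * Vᵀ) = 0) → lam * S''.trace = 0 := by
    intro S'' hS''H hφ''
    obtain ⟨ε₀, hε₀, hpert⟩ := posdef_add_smul hC hS''H
    have hval : ∀ t : ℝ, |t| < ε₀ → 0 ≤ lam * (t * S''.trace) := by
      intro t ht
      have h3 := hδ (U * (C + t • S'') * Vᵀ)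
      rw [hkey S'' hφ'' t ((hpert t ht).posSemidef), hnucδ] at h3
      nlinarith [h3]
    have hp := hval (ε₀ / 2) (by rw [abs_of_pos (by linarith)]; linarith)
    have hq := hval (-(ε₀ / 2)) (by rw [abs_of_neg (by linarith)]; linarith)
    nlinarith [hp, hq, hε₀]
  -- pick a direction with a negative eigenvalue
  have hSS : ∃ S' : Matrix (Fin δ.rank) (Fin δ.rank) ℝ, S'.IsHermitian ∧
      (∀ i j, mInner (G i j) (U * S' * Vᵀ) = 0) ∧ (∃ x, x ⬝ᵥ (S' *ᵥ x) < 0) := by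
    by_cases hex : ∃ x, x ⬝ᵥ (S *ᵥ x) < 0
    · exact ⟨S, hSH, hφ, hex⟩
    · by_cases hex2 : ∃ x, x ⬝ᵥ ((-S) *ᵥ x) < 0
      · refine ⟨-S, hSH.neg, fun i j => ?_, hex2⟩
        have h5 : U * (-S) * Vᵀ = -(U * S * Vᵀ) := by
          rw [Matrix.mul_neg, Matrix.neg_mul]
        rw [h5, show -(U * S * Vᵀ) = (-1 : ℝ) • (U * S * Vᵀ) by rw [neg_one_smul],
          mInner_smul, hφ i j, mul_zero]
      · exfalso
        apply hSne
        apply quadform_zero hSt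
        push_neg at hex hex2
        intro x
        have h6 := hex x
        have h7 := hex2 x
        rw [Matrix.neg_mulVec, dotProduct_neg] at h7
        linarith
  obtain ⟨S', hS'H, hφ', hneg'⟩ := hSS
  have hts' : lam * S'.trace = 0 := hts S' hS'H hφ'
  obtain ⟨t, ht0, hpsd, hnpd⟩ := exists_boundary hC hS'H hneg'
  have hmin' : ∀ δ'', Lhat G b ℓ (U * (C + t • S') * Vᵀ)
      + lam * nuclearNorm (U * (C + t • S') * Vᵀ)
      ≤ Lhat G b ℓ δ'' + lam * nuclearNorm δ'' := by
    intro δ''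
    rw [hkey S' hφ' t hpsd]
    have h8 : lam * (C.trace + t * S'.trace) = lam * C.trace + t * (lam * S'.trace) := by ring
    rw [h8, hts', mul_zero, add_zero, ← hnucδ]
    exact hδ δ''
  have hrank' : (U * (C + t • S') * Vᵀ).rank < δ.rank := by
    rw [rank_conj U V hU hV]
    exact rank_lt_of_not_posdef hpsd hnpd
  exact IH _ hrank' _ rfl hmin'
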